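/- Let X be a compact Hausdorff space, Y a finite set (with the discrete topology/uniformity), T : X → Set Y a multifunction with nonempty values and open fibers T⁻¹(y), and Z a topological vector space with a map ι : Y → Z. Then there exist a continuous map f : X → Δₙ (where n+1 = |Y|, Y = {a₀,…,aₙ}) such that for all x ∈ X and all i with f(x)ᵢ ≠ 0 one has aᵢ ∈ T(x); consequently x ↦ Σᵢ f(x)ᵢ ι(aᵢ) is a continuous selection of convexHull(ι(T(x))). -/

import Mathlib

/-- Browder-type selection for a finite discrete target: a multifunction with
nonempty values and open fibers into a finite set admits a continuous map into
the standard simplex supported on the values, giving a continuous selection of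
the convex hull of the image under any map into a topological vector space. -/
theorem browder_type_discrete_selection
    {X : Type*} [TopologicalSpace X] [CompactSpace X] [T2Space X]
    {Y : Type*} [Fintype Y]
    {Z : Type*} [AddCommGroup Z] [Module ℝ Z] [TopologicalSpace Z]
    [IsTopologicalAddGroup Z] [ContinuousSMul ℝ Z]
    (T : X → Set Y)
    (hne : ∀ x, (T x).Nonempty)
    (hfib : ∀ y : Y, IsOpen {x : X | y ∈ T x})
    (ι : Y → Z) :
    ∃ f : X → stdSimplex ℝ Y,
      Continuous f ∧
      (∀ (x : X) (i : Y), (f x : Y → ℝ) i ≠ 0 → i ∈ T x) ∧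
      (∀ x, (∑ i, (f x : Y → ℝ) i • ι i) ∈ convexHull ℝ (ι '' T x)) := by
  have hcov : (Set.univ : Set X) ⊆ ⋃ y : Y, {x : X | y ∈ T x} := by
    intro x _
    obtain ⟨y, hy⟩ := hne x
    exact Set.mem_iUnion.2 ⟨y, hy⟩
  obtain ⟨ρ, hρ⟩ := PartitionOfUnity.exists_isSubordinate isClosed_univ
    (fun y : Y => {x : X | y ∈ T x}) hfib hcov
  have hsum : ∀ x : X, ∑ i, ρ i x = 1 := fun x => by
    rw [← finsum_eq_sum_of_fintype]; exact ρ.sum_eq_one (Set.mem_univ x)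
  have hmem : ∀ x : X, (fun i => ρ i x) ∈ stdSimplex ℝ Y :=
    fun x => ⟨fun i => ρ.nonneg i x, hsum x⟩
  have hsupp : ∀ (x : X) (i : Y), ρ i x ≠ 0 → i ∈ T x := by
    intro x i h
    exact hρ i (subset_tsupport _ h)
  refine ⟨fun x => ⟨fun i => ρ i x, hmem x⟩, ?_, ?_, ?_⟩
  · exact Continuous.subtype_mk (continuous_pi fun i => (ρ i).continuous) _
  · exact hsupp
  · intro x
    set w : Y → ℝ := fun i => ρ i x with hw
    set t : Finset Y := Finset.univ.filter fun i => w i ≠ 0 with ht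
    have hsum_t : ∑ i ∈ t, w i = 1 := by
      rw [← hsum x]
      exact Finset.sum_filter_ne_zero _
    have h1 : (∑ i, w i • ι i) = ∑ i ∈ t, w i • ι i := by
      refine (Finset.sum_filter_of_ne ?_).symm
      intro i _ h hi
      exact h (by rw [hi, zero_smul])
    change (∑ i, w i • ι i) ∈ convexHull ℝ (ι '' T x)
    rw [h1]
    have := t.centerMass_mem_convexHull (w := w) (z := ι) (s := ι '' T x)
      (fun i hi => ρ.nonneg i x) (by rw [hsum_t]; norm_num)
      (fun i hi => ⟨i, hsupp x i (by simpa [ht] using hi), rfl⟩)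
    rwa [Finset.centerMass, hsum_t, inv_one, one_smul] at this
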